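/- Under the hypotheses of the discrete maximum principle (0 < φⁿ, φⁿ⁺¹ < 1 pointwise), the solution of the stabilized scheme satisfies the discrete energy dissipation inequality E_h(φⁿ⁺¹) − E_h(φⁿ) ≤ −(1/τ)‖φⁿ⁺¹ − φⁿ‖², where E_h(φ) = ⟨F(φ),1⟩ + (ε²/2)‖∇_h φ‖² and F is the logarithmic Flory–Huggins potential. -/
import Mathlib


noncomputable def gradX {N M : ℕ} (h : ℝ) (φ : Fin N × Fin M → ℝ)
    (p : Fin (N + 1) × Fin M) : ℝ :=
  if hp : 0 < p.1.val ∧ p.1.val < N then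
    (φ (⟨p.1.val, hp.2⟩, p.2) - φ (⟨p.1.val - 1, by omega⟩, p.2)) / h
  else 0

noncomputable def gradY {N M : ℕ} (h : ℝ) (φ : Fin N × Fin M → ℝ)
    (p : Fin N × Fin (M + 1)) : ℝ :=
  if hp : 0 < p.2.val ∧ p.2.val < M then
    (φ (p.1, ⟨p.2.val, hp.2⟩) - φ (p.1, ⟨p.2.val - 1, by omega⟩)) / h
  else 0

/-- Cell-centered five-point discrete Laplacian with homogeneous Neumann
boundary conditions (boundary fluxes vanish). -/
noncomputable def discLap {N M : ℕ} (h : ℝ) (φ : Fin N × Fin M → ℝ)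
    (p : Fin N × Fin M) : ℝ :=
  (gradX h φ (p.1.succ, p.2) - gradX h φ (p.1.castSucc, p.2)) / h
    + (gradY h φ (p.1, p.2.succ) - gradY h φ (p.1, p.2.castSucc)) / h

/-- Discrete L² inner product. -/
noncomputable def discInner {N M : ℕ} (h : ℝ) (φ ψ : Fin N × Fin M → ℝ) : ℝ :=
  h ^ 2 * ∑ p : Fin N × Fin M, φ p * ψ p

/-- Discrete H¹ seminorm squared: ‖∇ₕφ‖². -/
noncomputable def discGradNormSq {N M : ℕ} (h : ℝ) (φ : Fin N × Fin M → ℝ) : ℝ :=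
  h ^ 2 * ((∑ p : Fin (N + 1) × Fin M, gradX h φ p ^ 2)
    + ∑ p : Fin N × Fin (M + 1), gradY h φ p ^ 2)

noncomputable def FH (θ φ : ℝ) : ℝ :=
  φ * Real.log φ + (1 - φ) * Real.log (1 - φ) + θ * (φ - φ ^ 2)

noncomputable def fchem (lam θ b a : ℝ) : ℝ :=
  Real.log b - Real.log (1 - b) + (lam + 1) * (a / b - (1 - a) / (1 - b)) + θ * (1 - a - b)

/-- Discrete total free energy. -/
noncomputable def discEnergy {N M : ℕ} (h ε θ : ℝ) (φ : Fin N × Fin M → ℝ) : ℝ :=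
  discInner h (fun p => FH θ (φ p)) (fun _ => 1) + ε ^ 2 / 2 * discGradNormSq h φ

/-! ### Auxiliary lemmas -/

lemma sbp_nat (N : ℕ) (h : ℝ) (G v : ℕ → ℝ) (hG0 : G 0 = 0) (hGN : G N = 0) :
    ∑ i ∈ Finset.range N, (G (i+1) - G i) / h * v i
      = -∑ i ∈ Finset.range (N+1), G i *
          (if 0 < i ∧ i < N then (v i - v (i-1)) / h else 0) := by
  have e1 : ∑ i ∈ Finset.range N, G (i+1) * v i
      = ∑ i ∈ Finset.range (N+1), G i * v (i-1) := by
    rw [Finset.sum_range_succ' (fun i => G i * v (i-1))]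
    simp [hG0]
  have e2 : ∑ i ∈ Finset.range N, G i * v i
      = ∑ i ∈ Finset.range (N+1), G i * v i := by
    rw [Finset.sum_range_succ]
    simp [hGN]
  have e3 : ∑ i ∈ Finset.range N, (G (i+1) - G i) / h * v i
      = ∑ i ∈ Finset.range N, G (i+1) * v i / h - ∑ i ∈ Finset.range N, G i * v i / h := by
    rw [← Finset.sum_sub_distrib]
    exact Finset.sum_congr rfl fun i _ => by ring
  rw [e3, ← Finset.sum_div, ← Finset.sum_div, e1, e2, div_sub_div_same,
    ← Finset.sum_sub_distrib, Finset.sum_div]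
  have key : ∀ i ∈ Finset.range (N+1), (G i * v (i-1) - G i * v i) / h
      = -(G i * (if 0 < i ∧ i < N then (v i - v (i-1)) / h else 0)) := by
    intro i hi
    by_cases hc : 0 < i ∧ i < N
    · rw [if_pos hc]; ring
    · rw [if_neg hc]
      have hi' : i < N + 1 := Finset.mem_range.mp hi
      have : i = 0 ∨ i = N := by omega
      rcases this with rfl | rfl
      · simp
      · simp [hGN]
  rw [Finset.sum_congr rfl key, Finset.sum_neg_distrib]

lemma sbpX {N M : ℕ} (h : ℝ) (φ ψ : Fin N × Fin M → ℝ) (j : Fin M) :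
    ∑ i : Fin N, (gradX h φ (i.succ, j) - gradX h φ (i.castSucc, j)) / h * ψ (i, j)
      = -∑ i : Fin (N+1), gradX h φ (i, j) * gradX h ψ (i, j) := by
  set Gn : ℕ → ℝ := fun i => if hi : i < N + 1 then gradX h φ (⟨i, hi⟩, j) else 0 with hGn
  set vn : ℕ → ℝ := fun i => if hi : i < N then ψ (⟨i, hi⟩, j) else 0 with hvn
  have hG0 : Gn 0 = 0 := by
    simp only [hGn]
    rw [dif_pos (by omega : (0:ℕ) < N + 1)]
    rw [gradX, dif_neg (by simp)]
  have hGNN : Gn N = 0 := by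
    simp only [hGn]
    rw [dif_pos (by omega : N < N + 1)]
    rw [gradX, dif_neg (by simp)]
  have hGn_fin : ∀ i : Fin (N+1), Gn i.val = gradX h φ (i, j) := by
    intro i
    simp only [hGn]
    rw [dif_pos i.isLt]
  have hGn_succ : ∀ i : Fin N, Gn (i.val + 1) = gradX h φ (i.succ, j) := by
    intro i
    simp only [hGn]
    rw [dif_pos (by omega : i.val + 1 < N + 1)]
    rfl
  have hGn_cast : ∀ i : Fin N, Gn i.val = gradX h φ (i.castSucc, j) := by
    intro i
    simp only [hGn]
    rw [dif_pos (by omega : i.val < N + 1)]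
    rfl
  have hvn_fin : ∀ i : Fin N, vn i.val = ψ (i, j) := by
    intro i
    simp only [hvn]
    rw [dif_pos i.isLt]
  have hH : ∀ i : Fin (N+1),
      (if 0 < i.val ∧ i.val < N then (vn i.val - vn (i.val-1)) / h else 0)
        = gradX h ψ (i, j) := by
    intro i
    by_cases hp : 0 < i.val ∧ i.val < N
    · rw [if_pos hp, gradX, dif_pos hp]
      simp only [hvn]
      rw [dif_pos hp.2, dif_pos (by omega : i.val - 1 < N)]
    · rw [if_neg hp, gradX, dif_neg hp]
  calc ∑ i : Fin N, (gradX h φ (i.succ, j) - gradX h φ (i.castSucc, j)) / h * ψ (i, j)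
      = ∑ i : Fin N, (Gn (i.val+1) - Gn i.val) / h * vn i.val := by
        refine Finset.sum_congr rfl fun i _ => ?_
        rw [hGn_succ, hGn_cast, hvn_fin]
    _ = ∑ i ∈ Finset.range N, (Gn (i+1) - Gn i) / h * vn i :=
        Fin.sum_univ_eq_sum_range (fun i => (Gn (i+1) - Gn i) / h * vn i) N
    _ = -∑ i ∈ Finset.range (N+1), Gn i *
          (if 0 < i ∧ i < N then (vn i - vn (i-1)) / h else 0) :=
        sbp_nat N h Gn vn hG0 hGNN
    _ = -∑ i : Fin (N+1), Gn i.val *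
          (if 0 < i.val ∧ i.val < N then (vn i.val - vn (i.val-1)) / h else 0) := by
        rw [Fin.sum_univ_eq_sum_range
          (fun i => Gn i * (if 0 < i ∧ i < N then (vn i - vn (i-1)) / h else 0)) (N+1)]
    _ = -∑ i : Fin (N+1), gradX h φ (i, j) * gradX h ψ (i, j) := by
        congr 1
        refine Finset.sum_congr rfl fun i _ => ?_
        rw [hGn_fin, hH]

lemma sbpY {N M : ℕ} (h : ℝ) (φ ψ : Fin N × Fin M → ℝ) (i : Fin N) :
    ∑ j : Fin M, (gradY h φ (i, j.succ) - gradY h φ (i, j.castSucc)) / h * ψ (i, j)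
      = -∑ j : Fin (M+1), gradY h φ (i, j) * gradY h ψ (i, j) := by
  set Gn : ℕ → ℝ := fun j => if hj : j < M + 1 then gradY h φ (i, ⟨j, hj⟩) else 0 with hGn
  set vn : ℕ → ℝ := fun j => if hj : j < M then ψ (i, ⟨j, hj⟩) else 0 with hvn
  have hG0 : Gn 0 = 0 := by
    simp only [hGn]
    rw [dif_pos (by omega : (0:ℕ) < M + 1)]
    rw [gradY, dif_neg (by simp)]
  have hGMM : Gn M = 0 := by
    simp only [hGn]
    rw [dif_pos (by omega : M < M + 1)]
    rw [gradY, dif_neg (by simp)]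
  have hGn_fin : ∀ j : Fin (M+1), Gn j.val = gradY h φ (i, j) := by
    intro j
    simp only [hGn]
    rw [dif_pos j.isLt]
  have hGn_succ : ∀ j : Fin M, Gn (j.val + 1) = gradY h φ (i, j.succ) := by
    intro j
    simp only [hGn]
    rw [dif_pos (by omega : j.val + 1 < M + 1)]
    rfl
  have hGn_cast : ∀ j : Fin M, Gn j.val = gradY h φ (i, j.castSucc) := by
    intro j
    simp only [hGn]
    rw [dif_pos (by omega : j.val < M + 1)]
    rfl
  have hvn_fin : ∀ j : Fin M, vn j.val = ψ (i, j) := by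
    intro j
    simp only [hvn]
    rw [dif_pos j.isLt]
  have hH : ∀ j : Fin (M+1),
      (if 0 < j.val ∧ j.val < M then (vn j.val - vn (j.val-1)) / h else 0)
        = gradY h ψ (i, j) := by
    intro j
    by_cases hp : 0 < j.val ∧ j.val < M
    · rw [if_pos hp, gradY, dif_pos hp]
      simp only [hvn]
      rw [dif_pos hp.2, dif_pos (by omega : j.val - 1 < M)]
    · rw [if_neg hp, gradY, dif_neg hp]
  calc ∑ j : Fin M, (gradY h φ (i, j.succ) - gradY h φ (i, j.castSucc)) / h * ψ (i, j)
      = ∑ j : Fin M, (Gn (j.val+1) - Gn j.val) / h * vn j.val := by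
        refine Finset.sum_congr rfl fun j _ => ?_
        rw [hGn_succ, hGn_cast, hvn_fin]
    _ = ∑ j ∈ Finset.range M, (Gn (j+1) - Gn j) / h * vn j :=
        Fin.sum_univ_eq_sum_range (fun j => (Gn (j+1) - Gn j) / h * vn j) M
    _ = -∑ j ∈ Finset.range (M+1), Gn j *
          (if 0 < j ∧ j < M then (vn j - vn (j-1)) / h else 0) :=
        sbp_nat M h Gn vn hG0 hGMM
    _ = -∑ j : Fin (M+1), Gn j.val *
          (if 0 < j.val ∧ j.val < M then (vn j.val - vn (j.val-1)) / h else 0) := by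
        rw [Fin.sum_univ_eq_sum_range
          (fun j => Gn j * (if 0 < j ∧ j < M then (vn j - vn (j-1)) / h else 0)) (M+1)]
    _ = -∑ j : Fin (M+1), gradY h φ (i, j) * gradY h ψ (i, j) := by
        congr 1
        refine Finset.sum_congr rfl fun j _ => ?_
        rw [hGn_fin, hH]

lemma sbp2 {N M : ℕ} (h : ℝ) (φ ψ : Fin N × Fin M → ℝ) :
    ∑ p : Fin N × Fin M, discLap h φ p * ψ p
      = -((∑ p : Fin (N+1) × Fin M, gradX h φ p * gradX h ψ p)
        + ∑ p : Fin N × Fin (M+1), gradY h φ p * gradY h ψ p) := by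
  have hsplit : ∀ p : Fin N × Fin M, discLap h φ p * ψ p
      = (gradX h φ (p.1.succ, p.2) - gradX h φ (p.1.castSucc, p.2)) / h * ψ p
        + (gradY h φ (p.1, p.2.succ) - gradY h φ (p.1, p.2.castSucc)) / h * ψ p := by
    intro p; rw [discLap]; ring
  rw [Finset.sum_congr rfl (fun p _ => hsplit p), Finset.sum_add_distrib]
  have hx : ∑ p : Fin N × Fin M,
        (gradX h φ (p.1.succ, p.2) - gradX h φ (p.1.castSucc, p.2)) / h * ψ p
      = -∑ p : Fin (N+1) × Fin M, gradX h φ p * gradX h ψ p := by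
    rw [Fintype.sum_prod_type_right
      (f := fun p : Fin N × Fin M =>
        (gradX h φ (p.1.succ, p.2) - gradX h φ (p.1.castSucc, p.2)) / h * ψ p),
      Fintype.sum_prod_type_right
      (f := fun p : Fin (N+1) × Fin M => gradX h φ p * gradX h ψ p),
      ← Finset.sum_neg_distrib]
    exact Finset.sum_congr rfl fun j _ => sbpX h φ ψ j
  have hy : ∑ p : Fin N × Fin M,
        (gradY h φ (p.1, p.2.succ) - gradY h φ (p.1, p.2.castSucc)) / h * ψ p
      = -∑ p : Fin N × Fin (M+1), gradY h φ p * gradY h ψ p := by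
    rw [Fintype.sum_prod_type
      (f := fun p : Fin N × Fin M =>
        (gradY h φ (p.1, p.2.succ) - gradY h φ (p.1, p.2.castSucc)) / h * ψ p),
      Fintype.sum_prod_type
      (f := fun p : Fin N × Fin (M+1) => gradY h φ p * gradY h ψ p),
      ← Finset.sum_neg_distrib]
    exact Finset.sum_congr rfl fun i _ => sbpY h φ ψ i
  rw [hx, hy]; ring

lemma gradX_sub {N M : ℕ} (h : ℝ) (φ1 φ0 : Fin N × Fin M → ℝ)
    (p : Fin (N+1) × Fin M) :
    gradX h (fun q => φ1 q - φ0 q) p = gradX h φ1 p - gradX h φ0 p := by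
  by_cases hp : 0 < p.1.val ∧ p.1.val < N
  · rw [gradX, gradX, gradX, dif_pos hp, dif_pos hp, dif_pos hp]; ring
  · rw [gradX, gradX, gradX, dif_neg hp, dif_neg hp, dif_neg hp]; ring

lemma gradY_sub {N M : ℕ} (h : ℝ) (φ1 φ0 : Fin N × Fin M → ℝ)
    (p : Fin N × Fin (M+1)) :
    gradY h (fun q => φ1 q - φ0 q) p = gradY h φ1 p - gradY h φ0 p := by
  by_cases hp : 0 < p.2.val ∧ p.2.val < M
  · rw [gradY, gradY, gradY, dif_pos hp, dif_pos hp, dif_pos hp]; ring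
  · rw [gradY, gradY, gradY, dif_neg hp, dif_neg hp, dif_neg hp]; ring

lemma log_convexity (x y : ℝ) (hx : 0 < x) (hy : 0 < y) :
    x * Real.log x - y * Real.log y ≤ Real.log y * (x - y) + x * (x - y) / y := by
  have hlog : Real.log x - Real.log y ≤ (x - y) / y := by
    rw [← Real.log_div (ne_of_gt hx) (ne_of_gt hy)]
    have h1 := Real.log_le_sub_one_of_pos (div_pos hx hy)
    have h2 : x / y - 1 = (x - y) / y := by field_simp
    linarith
  have h3 : x * (Real.log x - Real.log y) ≤ x * ((x - y) / y) :=
    mul_le_mul_of_nonneg_left hlog hx.le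
  have h4 : x * ((x - y) / y) = x * (x - y) / y := by ring
  nlinarith [h3]

lemma pointwise_FH (lam θ a b : ℝ) (hlam : 0 ≤ lam)
    (ha : a ∈ Set.Ioo (0:ℝ) 1) (hb : b ∈ Set.Ioo (0:ℝ) 1) :
    FH θ a - FH θ b ≤ fchem lam θ b a * (a - b) := by
  obtain ⟨ha0, ha1⟩ := ha
  obtain ⟨hb0, hb1⟩ := hb
  have h1a : 0 < 1 - a := by linarith
  have h1b : 0 < 1 - b := by linarith
  have L1 := log_convexity a b ha0 hb0
  have L2 := log_convexity (1-a) (1-b) h1a h1b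
  have hb' : b ≠ 0 := ne_of_gt hb0
  have h1b' : (1:ℝ) - b ≠ 0 := ne_of_gt h1b
  have hd : a/b - (1-a)/(1-b) = (a-b)/(b*(1-b)) := by
    rw [div_sub_div _ _ hb' h1b']
    congr 1
    ring
  have hQ : 0 ≤ (a/b - (1-a)/(1-b)) * (a-b) := by
    rw [hd, div_mul_eq_mul_div]
    exact div_nonneg (mul_self_nonneg _) (by positivity)
  have hQle : (a/b - (1-a)/(1-b)) * (a-b)
      ≤ (lam+1) * ((a/b - (1-a)/(1-b)) * (a-b)) := by nlinarith
  have hQ2 : a * (a-b) / b + (1-a) * ((1-a)-(1-b)) / (1-b)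
      = (a/b - (1-a)/(1-b)) * (a-b) := by
    field_simp
    ring
  have main : a * Real.log a + (1-a) * Real.log (1-a)
      - (b * Real.log b + (1-b) * Real.log (1-b))
      ≤ (Real.log b - Real.log (1-b)) * (a-b) + (a/b - (1-a)/(1-b)) * (a-b) := by
    linarith [L1, L2, hQ2]
  rw [FH, FH, fchem]
  nlinarith [main, hQle]

set_option maxHeartbeats 1000000 in
theorem discrete_energy_dissipation {N M : ℕ} (h τ ε lam θ : ℝ)
    (hh : 0 < h) (hτ : 0 < τ) (hε : 0 < ε) (hlam : 0 ≤ lam)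
    (φ0 φ1 : Fin N × Fin M → ℝ)
    (h0 : ∀ p, φ0 p ∈ Set.Ioo (0:ℝ) 1) (h1 : ∀ p, φ1 p ∈ Set.Ioo (0:ℝ) 1)
    (hscheme : ∀ p, (φ1 p - φ0 p) / τ - ε ^ 2 * discLap h φ1 p
      + fchem lam θ (φ0 p) (φ1 p) = 0) :
    discEnergy h ε θ φ1 - discEnergy h ε θ φ0 ≤
      -(1 / τ) * discInner h (fun p => φ1 p - φ0 p) (fun p => φ1 p - φ0 p) := by
  set δ := fun p => φ1 p - φ0 p with hδ
  set Sf := ∑ p : Fin N × Fin M, fchem lam θ (φ0 p) (φ1 p) * (φ1 p - φ0 p) with hSf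
  set Sδ := ∑ p : Fin N × Fin M, δ p * δ p with hSδ
  set SX1 := ∑ p : Fin (N+1) × Fin M, gradX h φ1 p ^ 2 with hSX1
  set SX0 := ∑ p : Fin (N+1) × Fin M, gradX h φ0 p ^ 2 with hSX0
  set SY1 := ∑ p : Fin N × Fin (M+1), gradY h φ1 p ^ 2 with hSY1
  set SY0 := ∑ p : Fin N × Fin (M+1), gradY h φ0 p ^ 2 with hSY0
  set CX := ∑ p : Fin (N+1) × Fin M, gradX h φ1 p * gradX h δ p with hCX
  set CY := ∑ p : Fin N × Fin (M+1), gradY h φ1 p * gradY h δ p with hCY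
  set DX := ∑ p : Fin (N+1) × Fin M, gradX h δ p ^ 2 with hDX
  set DY := ∑ p : Fin N × Fin (M+1), gradY h δ p ^ 2 with hDY
  -- potential part
  have hF : (∑ p : Fin N × Fin M, FH θ (φ1 p)) - ∑ p : Fin N × Fin M, FH θ (φ0 p) ≤ Sf := by
    rw [← Finset.sum_sub_distrib]
    exact Finset.sum_le_sum fun p _ => pointwise_FH lam θ (φ1 p) (φ0 p) hlam (h1 p) (h0 p)
  have hF' : h ^ 2 * ((∑ p : Fin N × Fin M, FH θ (φ1 p)) - ∑ p : Fin N × Fin M, FH θ (φ0 p))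
      ≤ h ^ 2 * Sf := mul_le_mul_of_nonneg_left hF (sq_nonneg h)
  -- gradient part identities
  have hX : SX1 - SX0 = 2 * CX - DX := by
    rw [hSX1, hSX0, hCX, hDX, ← Finset.sum_sub_distrib, Finset.mul_sum,
      ← Finset.sum_sub_distrib]
    refine Finset.sum_congr rfl fun p _ => ?_
    rw [gradX_sub h φ1 φ0 p]
    ring
  have hY : SY1 - SY0 = 2 * CY - DY := by
    rw [hSY1, hSY0, hCY, hDY, ← Finset.sum_sub_distrib, Finset.mul_sum,
      ← Finset.sum_sub_distrib]
    refine Finset.sum_congr rfl fun p _ => ?_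
    rw [gradY_sub h φ1 φ0 p]
    ring
  have hDXpos : 0 ≤ DX := Finset.sum_nonneg fun p _ => sq_nonneg _
  have hDYpos : 0 ≤ DY := Finset.sum_nonneg fun p _ => sq_nonneg _
  -- summation by parts + scheme
  have hSBP : CX + CY = -∑ p : Fin N × Fin M, discLap h φ1 p * δ p := by
    rw [sbp2 h φ1 δ]; ring
  have hscheme' : ∀ p, ε ^ 2 * discLap h φ1 p = δ p / τ + fchem lam θ (φ0 p) (φ1 p) := by
    intro p
    have := hscheme p
    simp only [hδ]
    linarith
  have hL : ∑ p : Fin N × Fin M, ε ^ 2 * (discLap h φ1 p * δ p)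
      = 1 / τ * Sδ + Sf := by
    rw [hSδ, hSf, Finset.mul_sum, ← Finset.sum_add_distrib]
    refine Finset.sum_congr rfl fun p _ => ?_
    have e : ε ^ 2 * (discLap h φ1 p * δ p) = (ε ^ 2 * discLap h φ1 p) * δ p := by ring
    rw [e, hscheme' p]
    simp only [hδ]
    ring
  have hE : ε ^ 2 * (CX + CY) = -(1 / τ * Sδ + Sf) := by
    have t1 : ∑ p : Fin N × Fin M, ε ^ 2 * (discLap h φ1 p * δ p)
        = ε ^ 2 * ∑ p : Fin N × Fin M, discLap h φ1 p * δ p := by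
      rw [Finset.mul_sum]
    rw [hSBP, ← hL, t1]
    ring
  have hE' : h ^ 2 * (ε ^ 2 * (CX + CY)) = -(1 / τ * (h ^ 2 * Sδ)) - h ^ 2 * Sf := by
    rw [hE]; ring
  have hcore : ε ^ 2 / 2 * (h ^ 2 * (SX1 + SY1)) - ε ^ 2 / 2 * (h ^ 2 * (SX0 + SY0))
      + ε ^ 2 / 2 * h ^ 2 * (DX + DY) = h ^ 2 * (ε ^ 2 * (CX + CY)) := by
    linear_combination (ε ^ 2 / 2 * h ^ 2) * hX + (ε ^ 2 / 2 * h ^ 2) * hY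
  have hDD : 0 ≤ ε ^ 2 / 2 * h ^ 2 * (DX + DY) := by
    have : (0:ℝ) ≤ ε ^ 2 / 2 * h ^ 2 := by positivity
    exact mul_nonneg this (add_nonneg hDXpos hDYpos)
  -- assemble
  simp only [discEnergy, discInner, discGradNormSq, mul_one]
  simp only [← hδ, ← hSδ, ← hSX1, ← hSX0, ← hSY1, ← hSY0]
  nlinarith [hF', hE', hcore, hDD]
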